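/- For every k ≥ 1 and every n ≥ k, each row of any monotonically K_k-saturated simple n-row 0-1 matrix contains at least 2^{k−1} − 1 ones and at least 2^{k−1} − 1 zeros. -/

import Mathlib

/-- `F` is a submatrix of `M` (up to row/column permutations): there are injections
selecting rows and columns of `M` giving `F`. -/
def IsSubmatrix {α : Type*} {k c n m : ℕ} (F : Fin k → Fin c → α) (M : Fin n → Fin m → α) :
    Prop :=
  ∃ r : Fin k → Fin n, ∃ s : Fin c → Fin m,
    Function.Injective r ∧ Function.Injective s ∧ ∀ i j, M (r i) (s j) = F i j

/-- A matrix is simple if its columns are pairwise distinct. -/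
def Simple' {α : Type*} {n m : ℕ} (M : Fin n → Fin m → α) : Prop :=
  ∀ j₁ j₂ : Fin m, (∀ i, M i j₁ = M i j₂) → j₁ = j₂

/-- `C` occurs as a column of `M`. -/
def IsCol {α : Type*} {n m : ℕ} (M : Fin n → Fin m → α) (C : Fin n → α) : Prop :=
  ∃ j, ∀ i, M i j = C i

/-- The matrix `[M, C]` obtained by appending the column `C` to `M`. -/
def addCol {α : Type*} {n m : ℕ} (M : Fin n → Fin m → α) (C : Fin n → α) :
    Fin n → Fin (m + 1) → α :=
  fun i j => if h : (j : ℕ) < m then M i ⟨j, h⟩ else C i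

/-- `M` is `F`-saturated: simple, `F`-free, and adding any missing column creates `F`. -/
def Saturated {α : Type*} {k c n m : ℕ} (F : Fin k → Fin c → α) (M : Fin n → Fin m → α) :
    Prop :=
  Simple' M ∧ ¬ IsSubmatrix F M ∧
    ∀ C : Fin n → α, ¬ IsCol M C → IsSubmatrix F (addCol M C)

/-- The set of sizes (numbers of columns) of `F`-saturated `n`-row matrices. -/
def satSet {α : Type*} {k c : ℕ} (F : Fin k → Fin c → α) (n : ℕ) : Set ℕ :=
  {m | ∃ M : Fin n → Fin m → α, Saturated F M}

/-- The set of sizes of simple `F`-free `n`-row matrices. -/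
def forbSet {α : Type*} {k c : ℕ} (F : Fin k → Fin c → α) (n : ℕ) : Set ℕ :=
  {m | ∃ M : Fin n → Fin m → α, Simple' M ∧ ¬ IsSubmatrix F M}

/-- `K_k`: the `k × 2^k` 0-1 matrix of all distinct 0-1 columns of length `k`. -/
def Kfull (k : ℕ) : Fin k → Fin (2 ^ k) → Bool :=
  fun i j => Nat.testBit j.val i.val

/-- `F` is a submatrix of `M` using only rows from `A`. -/
def SubmatrixRows {α : Type*} {k c n m : ℕ} (A : Finset (Fin n)) (F : Fin k → Fin c → α)
    (M : Fin n → Fin m → α) : Prop :=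
  ∃ r : Fin k → Fin n, Function.Injective r ∧ (∀ i, r i ∈ A) ∧
    ∃ s : Fin c → Fin m, Function.Injective s ∧ ∀ i j, M (r i) (s j) = F i j

lemma kfull_col_inj (k : ℕ) {j₁ j₂ : Fin (2^k)}
    (h : ∀ a : Fin k, Kfull k a j₁ = Kfull k a j₂) : j₁ = j₂ := by
  apply Fin.ext
  apply Nat.eq_of_testBit_eq
  intro i
  by_cases hi : i < k
  · exact h ⟨i, hi⟩
  · push_neg at hi
    have h1 : (j₁ : ℕ) < 2 ^ i := lt_of_lt_of_le j₁.2 (Nat.pow_le_pow_right (by norm_num) hi)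
    have h2 : (j₂ : ℕ) < 2 ^ i := lt_of_lt_of_le j₂.2 (Nat.pow_le_pow_right (by norm_num) hi)
    rw [Nat.testBit_lt_two_pow h1, Nat.testBit_lt_two_pow h2]

lemma kfull_row_count (k : ℕ) (hk : 1 ≤ k) (a : Fin k) (b : Bool) :
    (Finset.univ.filter fun j : Fin (2^k) => Kfull k a j = b).card = 2^(k-1) := by
  have hpow : (2:ℕ)^(a:ℕ) < 2^k := Nat.pow_lt_pow_right (by norm_num) a.2
  set e : Fin (2^k) → Fin (2^k) := fun j => ⟨(j:ℕ) ^^^ 2^(a:ℕ), Nat.xor_lt_two_pow j.2 hpow⟩ with he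
  have hbit : ∀ j : Fin (2^k), Kfull k a (e j) = !(Kfull k a j) := by
    intro j
    simp only [Kfull, e, Nat.testBit_xor, Nat.testBit_two_pow_self, Bool.xor_true]
  have hcard : ∀ c : Bool,
      (Finset.univ.filter fun j : Fin (2^k) => Kfull k a j = c).card =
      (Finset.univ.filter fun j : Fin (2^k) => Kfull k a j = !c).card := by
    intro c
    apply Finset.card_bij' (fun j _ => e j) (fun j _ => e j)
    · intro j hj
      simp only [Finset.mem_filter, Finset.mem_univ, true_and] at hj ⊢
      rw [hbit, hj]
    · intro j hj
      simp only [Finset.mem_filter, Finset.mem_univ, true_and] at hj ⊢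
      rw [hbit, hj, Bool.not_not]
    · intro j _
      apply Fin.ext
      simp [e, Nat.xor_assoc]
    · intro j _
      apply Fin.ext
      simp [e, Nat.xor_assoc]
  have hsum : (Finset.univ.filter fun j : Fin (2^k) => Kfull k a j = b).card +
      (Finset.univ.filter fun j : Fin (2^k) => ¬ (Kfull k a j = b)).card = 2^k := by
    rw [Finset.card_filter_add_card_filter_not]
    simp
  have hneg : (Finset.univ.filter fun j : Fin (2^k) => ¬ (Kfull k a j = b)).card =
      (Finset.univ.filter fun j : Fin (2^k) => Kfull k a j = !b).card := by
    congr 1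
    apply Finset.filter_congr
    intro j _
    cases b <;> simp
  rw [hneg, ← hcard] at hsum
  have h2 : 2^k = 2 * 2^(k-1) := by
    rw [← pow_succ']
    congr 1
    omega
  omega

/-- If `addCol M C` contains `K_k` on rows `A` via `(r,s)`, and some column `jM` of `M`
agrees with `C` on all rows in the range of `r`, then `M` contains `K_k` on rows `A`. -/
lemma replace_col {k n m : ℕ} {M : Fin n → Fin m → Bool} {C : Fin n → Bool}
    {A : Finset (Fin n)} {r : Fin k → Fin n} {s : Fin (2^k) → Fin (m+1)}
    (hrinj : Function.Injective r) (hrA : ∀ a, r a ∈ A)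
    (hsinj : Function.Injective s)
    (hent : ∀ a j, addCol M C (r a) (s j) = Kfull k a j)
    (jM : Fin m) (hjM : ∀ a, M (r a) jM = C (r a)) :
    SubmatrixRows A (Kfull k) M := by
  by_cases hex : ∃ j0, (s j0 : ℕ) = m
  · obtain ⟨j0, hj0⟩ := hex
    have hlt : ∀ j, j ≠ j0 → (s j : ℕ) < m := by
      intro j hj
      have := (s j).2
      have hne : (s j : ℕ) ≠ m := by
        intro h
        exact hj (hsinj (Fin.ext (h.trans hj0.symm)))
      omega
    refine ⟨r, hrinj, hrA, fun j => if h : j = j0 then jM else ⟨(s j : ℕ), hlt j h⟩, ?_, ?_⟩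
    · intro j1 j2 h
      dsimp only at h
      by_cases h1 : j1 = j0 <;> by_cases h2 : j2 = j0
      · rw [h1, h2]
      · exfalso
        simp only [dif_pos h1, dif_neg h2] at h
        apply h2
        have hc : ∀ a, Kfull k a j2 = Kfull k a j0 := by
          intro a
          have e2 : M (r a) ⟨(s j2 : ℕ), hlt j2 h2⟩ = Kfull k a j2 := by
            have := hent a j2
            rwa [addCol, dif_pos (hlt j2 h2)] at this
          have e0 : M (r a) jM = Kfull k a j0 := by
            have := hent a j0
            rw [addCol, dif_neg (by omega)] at this
            rw [hjM a, this]
          rw [← e2, ← h, ← e0]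
        exact (kfull_col_inj k hc).symm ▸ rfl
      · exfalso
        simp only [dif_neg h1, dif_pos h2] at h
        apply h1
        have hc : ∀ a, Kfull k a j1 = Kfull k a j0 := by
          intro a
          have e1 : M (r a) ⟨(s j1 : ℕ), hlt j1 h1⟩ = Kfull k a j1 := by
            have := hent a j1
            rwa [addCol, dif_pos (hlt j1 h1)] at this
          have e0 : M (r a) jM = Kfull k a j0 := by
            have := hent a j0
            rw [addCol, dif_neg (by omega)] at this
            rw [hjM a, this]
          rw [← e1, h, ← e0]
        exact kfull_col_inj k hc
      · simp only [dif_neg h1, dif_neg h2] at h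
        have hv : (s j1 : ℕ) = (s j2 : ℕ) := by simpa using h
        exact hsinj (Fin.ext hv)
    · intro a j
      dsimp only
      by_cases h : j = j0
      · rw [dif_pos h, h]
        have := hent a j0
        rw [addCol, dif_neg (by omega)] at this
        rw [hjM a, this]
      · rw [dif_neg h]
        have := hent a j
        rwa [addCol, dif_pos (hlt j h)] at this
  · push_neg at hex
    have hlt : ∀ j, (s j : ℕ) < m := by
      intro j
      have := (s j).2
      have := hex j
      omega
    refine ⟨r, hrinj, hrA, fun j => ⟨(s j : ℕ), hlt j⟩, ?_, ?_⟩
    · intro j1 j2 h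
      dsimp only at h
      have hv : (s j1 : ℕ) = (s j2 : ℕ) := by simpa using h
      exact hsinj (Fin.ext hv)
    · intro a j
      have := hent a j
      rwa [addCol, dif_pos (hlt j)] at this

lemma main_count {k n m : ℕ} (hk : 1 ≤ k) (hn : k ≤ n) (M : Fin n → Fin m → Bool)
    (hM : Simple' M)
    (hsat : ∀ C : Fin n → Bool, ¬ IsCol M C →
      ∃ A : Finset (Fin n), ¬ SubmatrixRows A (Kfull k) M ∧
        SubmatrixRows A (Kfull k) (addCol M C)) (i : Fin n) (b : Bool) :
    2 ^ (k - 1) - 1 ≤ (Finset.univ.filter fun j => M i j = b).card := by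
  classical
  by_cases hP : ∃ C : Fin n → Bool, ¬ IsCol M C ∧ C i = b ∧
      ∃ (r : Fin k → Fin n) (s : Fin (2^k) → Fin (m+1)), Function.Injective s ∧
        (∀ a j, addCol M C (r a) (s j) = Kfull k a j) ∧ ∃ a, r a = i
  · -- row argument
    obtain ⟨C, hC, hCi, r, s, hsinj, hent, a, hra⟩ := hP
    set T := (Finset.univ.filter fun j : Fin (2^k) => Kfull k a j = b) with hT
    have hTcard : T.card = 2^(k-1) := kfull_row_count k hk a b
    set S := T.image s with hS
    have hScard : S.card = 2^(k-1) := by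
      rw [hS, Finset.card_image_of_injective _ hsinj, hTcard]
    set S' := S.erase (Fin.last m) with hS'
    have hS'card : 2^(k-1) - 1 ≤ S'.card := by
      rw [← hScard]; exact Finset.pred_card_le_card_erase
    have hm1 : 1 ≤ m := by
      have h2k : 2^k ≤ m + 1 := by
        have := Fintype.card_le_of_injective s hsinj
        simpa using this
      have : 2 ≤ 2^k := by
        calc 2 = 2^1 := (pow_one 2).symm
        _ ≤ 2^k := Nat.pow_le_pow_right (by norm_num) hk
      omega
    have hmaps : ∀ c ∈ S', (if h : (c : ℕ) < m then (⟨(c:ℕ), h⟩ : Fin m) else ⟨0, hm1⟩) ∈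
        (Finset.univ.filter fun j => M i j = b) := by
      intro c hc
      rw [hS', Finset.mem_erase] at hc
      obtain ⟨hcne, hcS⟩ := hc
      have hclt : (c : ℕ) < m := by
        have := c.2
        have : (c:ℕ) ≠ m := fun h => hcne (Fin.ext (by simp [h, Fin.last]))
        omega
      rw [dif_pos hclt]
      simp only [Finset.mem_filter, Finset.mem_univ, true_and]
      rw [hS, Finset.mem_image] at hcS
      obtain ⟨j, hjT, hjc⟩ := hcS
      rw [hT, Finset.mem_filter] at hjT
      have := hent a j
      rw [hjc, addCol, hra] at this
      rw [dif_pos hclt] at this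
      rw [this, hjT.2]
    have hinj : Set.InjOn (fun c : Fin (m+1) =>
        if h : (c : ℕ) < m then (⟨(c:ℕ), h⟩ : Fin m) else ⟨0, hm1⟩) ↑S' := by
      intro c1 hc1 c2 hc2 h
      rw [hS', Finset.coe_erase] at hc1 hc2
      have hlt1 : (c1 : ℕ) < m := by
        have hne : c1 ≠ Fin.last m := hc1.2
        have := c1.2
        have : (c1:ℕ) ≠ m := fun hh => hne (Fin.ext (by simp [hh, Fin.last]))
        omega
      have hlt2 : (c2 : ℕ) < m := by
        have hne : c2 ≠ Fin.last m := hc2.2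
        have := c2.2
        have : (c2:ℕ) ≠ m := fun hh => hne (Fin.ext (by simp [hh, Fin.last]))
        omega
      simp only [dif_pos hlt1, dif_pos hlt2] at h
      have hv : (c1 : ℕ) = (c2 : ℕ) := by simpa using h
      exact Fin.ext hv
    have := Finset.card_le_card_of_injOn _ hmaps hinj
    omega
  · -- flip argument
    push_neg at hP
    -- Step A : 2^k ≤ m + 1
    have hm1 : 2^k ≤ m + 1 := by
      by_cases hall : ∀ C : Fin n → Bool, IsCol M C
      · have hsurj : Function.Surjective (fun j : Fin m => fun x => M x j) := by
          intro C
          obtain ⟨j, hj⟩ := hall C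
          exact ⟨j, funext hj⟩
        have := Fintype.card_le_of_surjective _ hsurj
        simp only [Fintype.card_fun, Fintype.card_bool, Fintype.card_fin] at this
        have h2 : (2:ℕ)^k ≤ 2^n := Nat.pow_le_pow_right (by norm_num) hn
        omega
      · push_neg at hall
        obtain ⟨C, hC⟩ := hall
        obtain ⟨A, hA1, r, hrinj, hrA, s, hsinj, hent⟩ := hsat C hC
        have := Fintype.card_le_of_injective s hsinj
        simpa using this
    -- Step B : flips are columns
    have hflip : ∀ j : Fin m, M i j = !b →
        IsCol M (fun x => if x = i then b else M x j) := by
      intro j hj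
      by_contra hmiss
      obtain ⟨A, hA1, r, hrinj, hrA, s, hsinj, hent⟩ := hsat _ hmiss
      have hri : ∀ a, r a ≠ i := by
        intro a ha
        exact hP _ hmiss (if_pos rfl) r s hsinj hent a ha
      apply hA1
      apply replace_col hrinj hrA hsinj hent j
      intro a
      rw [if_neg (hri a)]
    -- Step C : injection
    have hle : (Finset.univ.filter fun j => M i j = !b).card ≤
        (Finset.univ.filter fun j => M i j = b).card := by
      set f : Fin m → Fin m := fun j =>
        if h : IsCol M (fun x => if x = i then b else M x j) then h.choose else j with hf
      have hfspec : ∀ j : Fin m, M i j = !b →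
          ∀ x, M x (f j) = if x = i then b else M x j := by
        intro j hj x
        have h := hflip j hj
        rw [hf]
        simp only [dif_pos h]
        exact h.choose_spec x
      apply Finset.card_le_card_of_injOn f
      · intro j hj
        simp only [Finset.coe_filter, Set.mem_setOf_eq, Finset.mem_filter, Finset.mem_univ, true_and] at hj ⊢
        rw [hfspec j hj i, if_pos rfl]
      · intro j1 hj1 j2 hj2 h
        simp only [Finset.coe_filter, Set.mem_setOf_eq, Finset.mem_univ, true_and] at hj1 hj2
        apply hM
        intro x
        by_cases hx : x = i
        · rw [hx, hj1, hj2]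
        · have e1 := hfspec j1 hj1 x
          have e2 := hfspec j2 hj2 x
          rw [if_neg hx] at e1 e2
          rw [← e1, ← e2, h]
    -- Step D : partition
    have hpart : (Finset.univ.filter fun j => M i j = b).card +
        (Finset.univ.filter fun j => M i j = !b).card = m := by
      have := Finset.card_filter_add_card_filter_not
        (s := Finset.univ) (p := fun j : Fin m => M i j = b)
      have hneg : (Finset.univ.filter fun j : Fin m => ¬ (M i j = b)).card =
          (Finset.univ.filter fun j : Fin m => M i j = !b).card := by
        congr 1
        apply Finset.filter_congr
        intro j _
        cases b <;> simp
      simp only [Finset.card_univ, Fintype.card_fin] at this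
      omega
    have h2 : 2^k = 2 * 2^(k-1) := by
      rw [← pow_succ']
      congr 1
      omega
    omega

theorem stmt_4 (k n m : ℕ) (hk : 1 ≤ k) (hn : k ≤ n) (M : Fin n → Fin m → Bool)
    (hM : Simple' M)
    (hsat : ∀ C : Fin n → Bool, ¬ IsCol M C →
      ∃ A : Finset (Fin n), ¬ SubmatrixRows A (Kfull k) M ∧
        SubmatrixRows A (Kfull k) (addCol M C)) :
    ∀ i : Fin n,
      2 ^ (k - 1) - 1 ≤ (Finset.univ.filter fun j => M i j = true).card ∧
      2 ^ (k - 1) - 1 ≤ (Finset.univ.filter fun j => M i j = false).card := by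
  intro i
  exact ⟨main_count hk hn M hM hsat i true, main_count hk hn M hM hsat i false⟩
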